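/- (SHEL network as the expectation of a randomised sign predictor) Let d, K ∈ ℕ⁺, β > 0, U ∈ ℝ^{K×d} with rows u_1,…,u_K, and v ∈ ℝ^K with v ≠ 0. Define the mixture distribution Q on ℝ^d with 2K Gaussian components: component k ∈ {1,…,K} is N(u_k, (1/(2β²))·I_d) with weight max(0, v_k)/‖v‖₁, and component K+k is N(−u_k, (1/(2β²))·I_d) with weight max(0, −v_k)/‖v‖₁. Then for every x ∈ ℝ^d with x ≠ 0: E_{w∼Q}[ sign(w · x) ] = (1/‖v‖₁) · Σ_{k=1}^K v_k · erf( β · (u_k · x)/‖x‖₂ ). -/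

import Mathlib

open MeasureTheory ProbabilityTheory
open scoped ENNReal NNReal

/-- The Gaussian error function `erf(t) = (2/√π) ∫₀ᵗ e^(−s²) ds`. -/
noncomputable def erf (t : ℝ) : ℝ :=
  2 / Real.sqrt Real.pi * ∫ s in (0 : ℝ)..t, Real.exp (-(s ^ 2))

/-- The multivariate Gaussian `N(μ, σ²I_d)` on `ℝ^d`, as a product of independent
one-dimensional Gaussians with means `μ i` and common variance `σ²`. -/
noncomputable def gaussPi {d : ℕ} (μ : Fin d → ℝ) (v : ℝ≥0) : Measure (Fin d → ℝ) :=
  Measure.pi fun i => gaussianReal (μ i) v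

lemma measurable_realSign : Measurable Real.sign := by
  have h : Real.sign = fun r : ℝ => if r < 0 then (-1 : ℝ) else if 0 < r then 1 else 0 := by
    funext r; rw [Real.sign]
  rw [h]
  exact Measurable.ite measurableSet_Iio measurable_const
    (Measurable.ite measurableSet_Ioi measurable_const measurable_const)

lemma abs_realSign_le (t : ℝ) : |Real.sign t| ≤ 1 := by
  rcases Real.sign_apply_eq t with h | h | h <;> simp [h]

lemma realSign_eq_indicator : Real.sign = fun t : ℝ =>
    (Set.Ioi (0:ℝ)).indicator (fun _ => (1:ℝ)) t
      + (Set.Iio (0:ℝ)).indicator (fun _ => (-1:ℝ)) t := by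
  funext t
  rcases lt_trichotomy t 0 with h | h | h
  · simp [Real.sign_of_neg h, Set.indicator_apply, h, not_lt.2 h.le, asymm h]
  · simp [h, Real.sign_zero]
  · simp [Real.sign_of_pos h, Set.indicator_apply, h, not_lt.2 h.le, asymm h]

lemma integral_realSign (μ : Measure ℝ) [IsFiniteMeasure μ] :
    ∫ t, Real.sign t ∂μ = (μ (Set.Ioi 0)).toReal - (μ (Set.Iio 0)).toReal := by
  rw [realSign_eq_indicator]
  rw [integral_add ((integrable_const (1:ℝ)).indicator measurableSet_Ioi)
    ((integrable_const (-1:ℝ)).indicator measurableSet_Iio)]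
  rw [integral_indicator_const _ measurableSet_Ioi, integral_indicator_const _ measurableSet_Iio]
  simp [sub_eq_add_neg]
  rfl

lemma erf_neg (t : ℝ) : erf (-t) = - erf t := by
  unfold erf
  have : ∫ s in (0:ℝ)..t, Real.exp (-(s^2)) = ∫ s in (0:ℝ)..t, Real.exp (-((-s)^2)) := by
    simp
  rw [this, intervalIntegral.integral_comp_neg (fun s => Real.exp (-(s^2)))]
  rw [show -(0:ℝ) = 0 by ring, intervalIntegral.integral_symm]
  ring

lemma integral_realSign_gaussian (m : ℝ) {v : ℝ≥0} (hv : v ≠ 0) :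
    ∫ t, Real.sign t ∂(gaussianReal m v) = erf (m / Real.sqrt (2 * v)) := by
  have hvpos : (0:ℝ) < v := lt_of_le_of_ne v.coe_nonneg (by exact_mod_cast hv.symm)
  set p : ℝ → ℝ := gaussianPDFReal 0 v with hp
  have hpint : Integrable p := integrable_gaussianPDFReal 0 v
  have hpnn : ∀ t, 0 ≤ p t := gaussianPDFReal_nonneg 0 v
  have hptot : ∫ t, p t = 1 := integral_gaussianPDFReal_eq_one 0 hv
  have hpeven : ∀ t, p (-t) = p t := by
    intro t; simp [hp, gaussianPDFReal, neg_sq]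
  -- measure values as set integrals of p, after translating by m
  have hmap : (gaussianReal 0 v).map (· + m) = gaussianReal m v := by
    simpa using gaussianReal_map_add_const (μ := 0) (v := v) m
  have happly : ∀ s : Set ℝ, MeasurableSet s →
      gaussianReal m v s = ENNReal.ofReal (∫ t in (· + m) ⁻¹' s, p t) := by
    intro s hs
    rw [← hmap, Measure.map_apply (measurable_add_const m) hs,
      gaussianReal_apply_eq_integral 0 hv]
  have hIoi : (gaussianReal m v (Set.Ioi 0)).toReal = ∫ t in Set.Ioi (-m), p t := by
    rw [happly _ measurableSet_Ioi, Set.preimage_add_const_Ioi, zero_sub,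
      ENNReal.toReal_ofReal (setIntegral_nonneg measurableSet_Ioi fun t _ => hpnn t)]
  have hIio : (gaussianReal m v (Set.Iio 0)).toReal = ∫ t in Set.Iio (-m), p t := by
    rw [happly _ measurableSet_Iio, Set.preimage_add_const_Iio, zero_sub,
      ENNReal.toReal_ofReal (setIntegral_nonneg measurableSet_Iio fun t _ => hpnn t)]
  rw [integral_realSign, hIoi, hIio]
  -- reduce to Iic integrals
  have hIioIic : ∀ a : ℝ, ∫ t in Set.Iio a, p t = ∫ t in Set.Iic a, p t := by
    intro a
    exact setIntegral_congr_set Iio_ae_eq_Iic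
  have hIoiIic : ∀ a : ℝ, ∫ t in Set.Ioi a, p t = 1 - ∫ t in Set.Iic a, p t := by
    intro a
    have := integral_add_compl (measurableSet_Iic (a := a)) hpint
    rw [Set.compl_Iic] at this
    rw [← hptot, ← this]; ring
  have hhalf : ∫ t in Set.Iic (0:ℝ), p t = 1/2 := by
    have h1 : ∫ t in Set.Ioi (0:ℝ), p t = ∫ t in Set.Iic (0:ℝ), p t := by
      have h1' := integral_comp_neg_Ioi (0:ℝ) p
      rw [neg_zero] at h1'
      rw [← h1']
      exact setIntegral_congr_fun measurableSet_Ioi fun t _ => (hpeven t).symm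
    have h2 := hIoiIic 0
    rw [h1] at h2
    linarith
  have hstep : (∫ t in Set.Iic (0:ℝ), p t) - ∫ t in Set.Iic (-m), p t
      = ∫ t in (-m)..0, p t :=
    intervalIntegral.integral_Iic_sub_Iic (a := -m) (b := 0) hpint.integrableOn hpint.integrableOn
  have hsym : ∫ t in (-m)..0, p t = ∫ t in (0:ℝ)..m, p t := by
    have := intervalIntegral.integral_comp_neg (a := (0:ℝ)) (b := m) p
    rw [neg_zero] at this
    rw [← this]
    exact intervalIntegral.integral_congr fun t _ => (hpeven t)
  have key : (∫ t in Set.Ioi (-m), p t) - ∫ t in Set.Iio (-m), p t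
      = 2 * ∫ t in (0:ℝ)..m, p t := by
    rw [hIioIic, hIoiIic]
    rw [← hsym, ← hstep, hhalf]
    ring
  rw [key, ← hsym, hsym]
  -- now compute the interval integral by substitution
  have hc : Real.sqrt (2 * v) ≠ 0 := by positivity
  have hcpos : (0:ℝ) < Real.sqrt (2 * v) := by positivity
  have hpeq : ∀ t : ℝ, p t = (Real.sqrt (2 * Real.pi * v))⁻¹
      * Real.exp (-(((Real.sqrt (2 * v))⁻¹ * t)^2)) := by
    intro t
    simp only [hp, gaussianPDFReal, sub_zero]
    congr 1
    rw [mul_pow, inv_pow, Real.sq_sqrt (by positivity : (0:ℝ) ≤ 2 * v)]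
    ring
  have : ∫ t in (0:ℝ)..m, p t
      = (Real.sqrt (2 * Real.pi * v))⁻¹ * ∫ t in (0:ℝ)..m,
          Real.exp (-(((Real.sqrt (2 * v))⁻¹ * t)^2)) := by
    rw [← intervalIntegral.integral_const_mul]
    exact intervalIntegral.integral_congr fun t _ => hpeq t
  rw [this, intervalIntegral.integral_comp_mul_left (fun s => Real.exp (-(s^2)))
    (inv_ne_zero hc)]
  unfold erf
  rw [mul_zero, smul_eq_mul, inv_inv]
  have harg : (Real.sqrt (2 * v))⁻¹ * m = m / Real.sqrt (2 * v) := by ring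
  rw [harg]
  have hconst : Real.sqrt (2 * Real.pi * v) = Real.sqrt Real.pi * Real.sqrt (2 * v) := by
    rw [← Real.sqrt_mul Real.pi_pos.le]
    congr 1; ring
  rw [hconst]
  have hπ : Real.sqrt Real.pi ≠ 0 := by positivity
  field_simp

lemma gauss_prod_aux (a1 a2 : ℝ) (h1 : 0 < a1) (h2 : 0 < a2) (m1 m2 a y : ℝ) :
    ((Real.sqrt (2 * Real.pi * a1))⁻¹ * Real.exp (-(a - m1)^2 / (2 * a1)))
      * ((Real.sqrt (2 * Real.pi * a2))⁻¹ * Real.exp (-(y - a - m2)^2 / (2 * a2)))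
    = ((Real.sqrt (2 * Real.pi * (a1 + a2)))⁻¹
          * Real.exp (-(y - (m1 + m2))^2 / (2 * (a1 + a2))))
      * ((Real.sqrt (2 * Real.pi * (a1 * a2 / (a1 + a2))))⁻¹
          * Real.exp (-(a - (m1 * a2 + (y - m2) * a1) / (a1 + a2))^2
              / (2 * (a1 * a2 / (a1 + a2))))) := by
  have hA : (0:ℝ) < a1 + a2 := by linarith
  rw [mul_mul_mul_comm, mul_mul_mul_comm ((Real.sqrt (2 * Real.pi * (a1 + a2)))⁻¹)]
  congr 1
  · rw [← mul_inv, ← mul_inv, ← Real.sqrt_mul (by positivity), ← Real.sqrt_mul (by positivity)]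
    congr 1
    field_simp
  · rw [← Real.exp_add, ← Real.exp_add]
    congr 1
    field_simp
    ring

lemma gaussianPDFReal_mul_conv (m1 m2 : ℝ) {v1 v2 : ℝ≥0} (h1 : v1 ≠ 0) (h2 : v2 ≠ 0)
    (a y : ℝ) :
    gaussianPDFReal m1 v1 a * gaussianPDFReal m2 v2 (y - a)
      = gaussianPDFReal (m1 + m2) (v1 + v2) y
        * gaussianPDFReal ((m1 * (v2:ℝ) + (y - m2) * (v1:ℝ)) / ((v1:ℝ) + (v2:ℝ)))
            (v1 * v2 / (v1 + v2)) a := by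
  have hv1 : (0:ℝ) < v1 := lt_of_le_of_ne v1.coe_nonneg (by exact_mod_cast h1.symm)
  have hv2 : (0:ℝ) < v2 := lt_of_le_of_ne v2.coe_nonneg (by exact_mod_cast h2.symm)
  have hmain := gauss_prod_aux (v1:ℝ) (v2:ℝ) hv1 hv2 m1 m2 a y
  simp only [gaussianPDFReal]
  push_cast
  convert hmain using 6 <;> push_cast <;> ring

lemma gaussianReal_conv (m1 m2 : ℝ) (v1 v2 : ℝ≥0) :
    ((gaussianReal m1 v1).prod (gaussianReal m2 v2)).map (fun p : ℝ × ℝ => p.1 + p.2)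
      = gaussianReal (m1 + m2) (v1 + v2) := by
  by_cases h1 : v1 = 0
  · subst h1
    rw [gaussianReal_zero_var, Measure.dirac_prod, Measure.map_map (by fun_prop) (by fun_prop)]
    have he : ((fun p : ℝ × ℝ => p.1 + p.2) ∘ Prod.mk m1) = (m1 + ·) := rfl
    rw [he, gaussianReal_map_const_add, zero_add, add_comm m2 m1]
  by_cases h2 : v2 = 0
  · subst h2
    rw [gaussianReal_zero_var, Measure.prod_dirac, Measure.map_map (by fun_prop) (by fun_prop)]
    have he : ((fun p : ℝ × ℝ => p.1 + p.2) ∘ (fun x => (x, m2))) = (· + m2) := rfl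
    rw [he, gaussianReal_map_add_const, add_zero]
  -- main case: both variances nonzero
  have hV : v1 + v2 ≠ 0 := by simp [add_eq_zero, h1, h2]
  have hvv : v1 * v2 / (v1 + v2) ≠ 0 := by
    simp [div_eq_zero_iff, mul_eq_zero, h1, h2, hV]
  have hGmeas : Measurable (fun q : ℝ × ℝ => gaussianPDF (m2 + q.1) v2 q.2) := by
    unfold gaussianPDF gaussianPDFReal
    apply Measurable.ennreal_ofReal
    fun_prop
  ext s hs
  rw [Measure.map_apply (by fun_prop) hs,
    Measure.prod_apply (s := (fun p : ℝ × ℝ => p.1 + p.2) ⁻¹' s) ((measurable_fst.add measurable_snd) hs)]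
  have hinner : ∀ a : ℝ,
      (gaussianReal m2 v2) (Prod.mk a ⁻¹' ((fun p : ℝ × ℝ => p.1 + p.2) ⁻¹' s))
        = ∫⁻ y in s, gaussianPDF (m2 + a) v2 y := by
    intro a
    have h := gaussianReal_map_const_add (μ := m2) (v := v2) a
    calc (gaussianReal m2 v2) (Prod.mk a ⁻¹' ((fun p : ℝ × ℝ => p.1 + p.2) ⁻¹' s))
        = (gaussianReal m2 v2) ((fun y => a + y) ⁻¹' s) := rfl
      _ = ((gaussianReal m2 v2).map (a + ·)) s := (Measure.map_apply (by fun_prop) hs).symm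
      _ = (gaussianReal (m2 + a) v2) s := by rw [h]
      _ = ∫⁻ y in s, gaussianPDF (m2 + a) v2 y := by
          rw [gaussianReal_of_var_ne_zero _ h2, withDensity_apply _ hs]
  simp_rw [hinner]
  have hgmeas : Measurable (fun a : ℝ => ∫⁻ y in s, gaussianPDF (m2 + a) v2 y) :=
    hGmeas.lintegral_prod_right'
  rw [gaussianReal_of_var_ne_zero _ h1,
    lintegral_withDensity_eq_lintegral_mul _ (measurable_gaussianPDF _ _) hgmeas]
  simp only [Pi.mul_apply]
  have hpull : ∀ a : ℝ, gaussianPDF m1 v1 a * ∫⁻ y in s, gaussianPDF (m2 + a) v2 y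
      = ∫⁻ y in s, gaussianPDF m1 v1 a * gaussianPDF (m2 + a) v2 y := fun a =>
    (lintegral_const_mul' _ _ ENNReal.ofReal_ne_top).symm
  simp_rw [hpull]
  rw [lintegral_lintegral_swap
    (((measurable_gaussianPDF m1 v1).comp measurable_fst).mul hGmeas).aemeasurable]
  have hinner2 : ∀ y : ℝ,
      ∫⁻ a, gaussianPDF m1 v1 a * gaussianPDF (m2 + a) v2 y
        = gaussianPDF (m1 + m2) (v1 + v2) y := by
    intro y
    have hpt : ∀ a : ℝ, gaussianPDF m1 v1 a * gaussianPDF (m2 + a) v2 y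
        = gaussianPDF (m1 + m2) (v1 + v2) y
          * gaussianPDF ((m1 * (v2:ℝ) + (y - m2) * (v1:ℝ)) / ((v1:ℝ) + (v2:ℝ)))
              (v1 * v2 / (v1 + v2)) a := by
      intro a
      unfold gaussianPDF
      rw [← ENNReal.ofReal_mul (gaussianPDFReal_nonneg _ _ _),
        ← ENNReal.ofReal_mul (gaussianPDFReal_nonneg _ _ _)]
      congr 1
      have hid := gaussianPDFReal_mul_conv m1 m2 h1 h2 a y
      rw [← gaussianPDFReal_sub (μ := m2) (v := v2) y a]
      exact hid
    simp_rw [hpt]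
    rw [lintegral_const_mul' (gaussianPDF (m1 + m2) (v1 + v2) y) _
        (by unfold gaussianPDF; exact ENNReal.ofReal_ne_top),
      lintegral_gaussianPDF_eq_one _ hvv, mul_one]
  simp_rw [hinner2]
  rw [gaussianReal_of_var_ne_zero _ hV, withDensity_apply _ hs]

lemma gaussPi_map_dot : ∀ (n : ℕ) (μ x : Fin n → ℝ) (v : ℝ≥0),
    (Measure.pi fun i => gaussianReal (μ i) v).map (fun w => ∑ i, w i * x i)
      = gaussianReal (∑ i, μ i * x i) (Real.toNNReal (∑ i, (x i)^2) * v) := by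
  intro n
  induction n with
  | zero =>
      intro μ x v
      have h0 : (fun w : Fin 0 → ℝ => ∑ i, w i * x i) = fun _ => 0 := by
        funext w; simp
      rw [h0, Measure.map_const]
      simp [gaussianReal_zero_var]
  | succ n IH =>
      intro μ x v
      set μ' : Fin n → ℝ := fun j => μ (Fin.succAbove 0 j) with hμ'
      set x' : Fin n → ℝ := fun j => x (Fin.succAbove 0 j) with hx'
      set e := MeasurableEquiv.piFinSuccAbove (fun _ : Fin (n + 1) => ℝ) 0 with he
      have hmp := measurePreserving_piFinSuccAbove
        (fun i : Fin (n + 1) => gaussianReal (μ i) v) 0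
      have hfe : (fun w : Fin (n + 1) → ℝ => ∑ i, w i * x i)
          = (fun p : ℝ × (Fin n → ℝ) => p.1 * x 0 + ∑ j, p.2 j * x' j) ∘ e := by
        funext w
        simp only [Function.comp_apply]
        have h1 : (e w).1 = w 0 := rfl
        have h2 : ∀ j, (e w).2 j = w (Fin.succAbove 0 j) := fun j => rfl
        rw [h1]
        simp_rw [h2, hx']
        exact Fin.sum_univ_succAbove (fun i => w i * x i) 0
      have hg1 : Measurable (fun p : ℝ × (Fin n → ℝ) => p.1 * x 0 + ∑ j, p.2 j * x' j) := by
        fun_prop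
      rw [hfe, ← Measure.map_map hg1 e.measurable, hmp.map_eq]
      have hsplit : (fun p : ℝ × (Fin n → ℝ) => p.1 * x 0 + ∑ j, p.2 j * x' j)
          = (fun q : ℝ × ℝ => q.1 + q.2)
            ∘ Prod.map (fun a : ℝ => a * x 0) (fun w : Fin n → ℝ => ∑ j, w j * x' j) := rfl
      rw [hsplit, ← Measure.map_map (by fun_prop) (by fun_prop),
        ← Measure.map_prod_map _ _ (by fun_prop) (by fun_prop)]
      have hIH := IH μ' x' v
      rw [hIH, gaussianReal_map_mul_const (x 0), gaussianReal_conv]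
      congr 1
      · rw [Fin.sum_univ_succAbove (fun i => μ i * x i) 0, mul_comm]
      · have hS : (0:ℝ) ≤ ∑ j, (x' j)^2 := by positivity
        have hsum : ∑ i, (x i)^2 = (x 0)^2 + ∑ j, (x' j)^2 :=
          Fin.sum_univ_succAbove (fun i => (x i)^2) 0
        rw [hsum, Real.toNNReal_add (sq_nonneg _) hS, add_mul]
        congr 2
        exact (Real.toNNReal_of_nonneg (sq_nonneg _)).symm

lemma integral_sign_gaussPi {d : ℕ} (μvec x : Fin d → ℝ) {β : ℝ} (hβ : 0 < β)
    (hx : (0:ℝ) < ∑ i, (x i)^2) :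
    ∫ w, Real.sign (∑ i, w i * x i) ∂(gaussPi μvec (Real.toNNReal (1 / (2 * β ^ 2))))
      = erf (β * (∑ i, μvec i * x i) / Real.sqrt (∑ i, (x i)^2)) := by
  set v₀ : ℝ≥0 := Real.toNNReal (1 / (2 * β ^ 2)) with hv₀
  have hv₀ne : v₀ ≠ 0 := by
    simp only [hv₀, ne_eq, Real.toNNReal_eq_zero, not_le]
    positivity
  set V : ℝ≥0 := Real.toNNReal (∑ i, (x i)^2) * v₀ with hV
  have hVne : V ≠ 0 := by
    simp only [hV, ne_eq, mul_eq_zero, not_or, Real.toNNReal_eq_zero, not_le]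
    exact ⟨hx, hv₀ne⟩
  have hmeas : Measurable (fun w : Fin d → ℝ => ∑ i, w i * x i) := by fun_prop
  have hmap := gaussPi_map_dot d μvec x v₀
  have hstep : ∫ w, Real.sign (∑ i, w i * x i) ∂(gaussPi μvec v₀)
      = ∫ t, Real.sign t ∂((gaussPi μvec v₀).map (fun w => ∑ i, w i * x i)) :=
    (integral_map hmeas.aemeasurable measurable_realSign.aestronglyMeasurable).symm
  rw [hstep]
  rw [show (gaussPi μvec v₀).map (fun w => ∑ i, w i * x i)
      = gaussianReal (∑ i, μvec i * x i) V from hmap]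
  rw [integral_realSign_gaussian _ hVne]
  congr 1
  have hVr : (V:ℝ) = (∑ i, (x i)^2) * (1 / (2 * β ^ 2)) := by
    rw [hV, NNReal.coe_mul, hv₀, Real.coe_toNNReal _ hx.le,
      Real.coe_toNNReal _ (by positivity)]
  have h2V : 2 * (V:ℝ) = (∑ i, (x i)^2) * (β⁻¹)^2 := by
    rw [hVr]; field_simp
  rw [h2V, Real.sqrt_mul hx.le, Real.sqrt_sq (by positivity)]
  have hs : Real.sqrt (∑ i, (x i)^2) ≠ 0 := by positivity
  field_simp


/-- SHEL network as the expectation of a randomised sign predictor: for the mixture `Q`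
with `2K` Gaussian components `N(±u_k, (1/(2β²))I_d)` weighted by `max(0, ±v_k)/‖v‖₁`,
`E_{w∼Q}[sign(w·x)] = (1/‖v‖₁) Σ_k v_k erf(β (u_k·x)/‖x‖₂)`. -/
theorem shel_as_expectation
    (d K : ℕ) (hd : 0 < d) (hK : 0 < K) (β : ℝ) (hβ : 0 < β)
    (u : Fin K → Fin d → ℝ) (v : Fin K → ℝ) (hv : v ≠ 0)
    (x : Fin d → ℝ) (hx : x ≠ 0) :
    (∫ w, Real.sign (∑ i, w i * x i)
        ∂((∑ k : Fin K, ENNReal.ofReal (max 0 (v k) / ∑ j, |v j|) •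
              gaussPi (u k) (Real.toNNReal (1 / (2 * β ^ 2)))) +
          ∑ k : Fin K, ENNReal.ofReal (max 0 (-v k) / ∑ j, |v j|) •
              gaussPi (fun i => -(u k i)) (Real.toNNReal (1 / (2 * β ^ 2))))) =
      (∑ j, |v j|)⁻¹ *
        ∑ k, v k * erf (β * (∑ i, u k i * x i) / Real.sqrt (∑ i, (x i) ^ 2)) := by
  set v₀ : ℝ≥0 := Real.toNNReal (1 / (2 * β ^ 2)) with hv₀
  set S : ℝ := ∑ j, |v j| with hS
  have hSpos : 0 < S := by
    obtain ⟨k, hk⟩ : ∃ k, v k ≠ 0 := Function.ne_iff.mp hv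
    exact Finset.sum_pos' (fun j _ => abs_nonneg _) ⟨k, Finset.mem_univ k, abs_pos.mpr hk⟩
  have hxpos : (0:ℝ) < ∑ i, (x i)^2 := by
    obtain ⟨i, hi⟩ : ∃ i, x i ≠ 0 := Function.ne_iff.mp hx
    exact Finset.sum_pos' (fun j _ => sq_nonneg _) ⟨i, Finset.mem_univ i, by positivity⟩
  set f : (Fin d → ℝ) → ℝ := fun w => Real.sign (∑ i, w i * x i) with hf
  have hfm : Measurable f := measurable_realSign.comp (by fun_prop)
  have hfint : ∀ μvec : Fin d → ℝ, Integrable f (gaussPi μvec v₀) := by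
    intro μvec
    have : IsProbabilityMeasure (gaussPi μvec v₀) := by
      unfold gaussPi; infer_instance
    refine (integrable_const (1:ℝ)).mono' hfm.aestronglyMeasurable (ae_of_all _ fun w => ?_)
    simpa [hf] using abs_realSign_le (∑ i, w i * x i)
  have hint1 : ∀ k : Fin K,
      Integrable f (ENNReal.ofReal (max 0 (v k) / S) • gaussPi (u k) v₀) :=
    fun k => (hfint (u k)).smul_measure ENNReal.ofReal_ne_top
  have hint2 : ∀ k : Fin K,
      Integrable f (ENNReal.ofReal (max 0 (-v k) / S) • gaussPi (fun i => -(u k i)) v₀) :=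
    fun k => (hfint _).smul_measure ENNReal.ofReal_ne_top
  rw [integral_add_measure
      (integrable_finset_sum_measure.2 fun k _ => hint1 k)
      (integrable_finset_sum_measure.2 fun k _ => hint2 k),
    integral_finset_sum_measure (fun k _ => hint1 k),
    integral_finset_sum_measure (fun k _ => hint2 k)]
  simp_rw [integral_smul_measure]
  have hpos : ∀ k : Fin K,
      (ENNReal.ofReal (max 0 (v k) / S)).toReal = max 0 (v k) / S := fun k =>
    ENNReal.toReal_ofReal (by positivity)
  have hneg : ∀ k : Fin K,
      (ENNReal.ofReal (max 0 (-v k) / S)).toReal = max 0 (-v k) / S := fun k =>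
    ENNReal.toReal_ofReal (by positivity)
  have hI1 : ∀ k : Fin K, ∫ w, f w ∂(gaussPi (u k) v₀)
      = erf (β * (∑ i, u k i * x i) / Real.sqrt (∑ i, (x i)^2)) := fun k =>
    integral_sign_gaussPi (u k) x hβ hxpos
  have hI2 : ∀ k : Fin K, ∫ w, f w ∂(gaussPi (fun i => -(u k i)) v₀)
      = - erf (β * (∑ i, u k i * x i) / Real.sqrt (∑ i, (x i)^2)) := by
    intro k
    rw [integral_sign_gaussPi (fun i => -(u k i)) x hβ hxpos, ← erf_neg]
    congr 1
    rw [show ∑ i, -(u k i) * x i = -∑ i, u k i * x i by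
      rw [← Finset.sum_neg_distrib]; exact Finset.sum_congr rfl fun i _ => by ring]
    ring
  simp_rw [hpos, hneg, hI1, hI2, smul_eq_mul]
  rw [← Finset.sum_add_distrib, Finset.mul_sum]
  refine Finset.sum_congr rfl fun k _ => ?_
  have hmax : max (v k) 0 - max (-v k) 0 = v k := max_zero_sub_max_neg_zero_eq_self (v k)
  rw [max_comm (0:ℝ) (v k), max_comm (0:ℝ) (-v k)]
  conv_rhs => rw [← hmax]
  ring
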